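/- Let q be a positive integer and let W be a finite set of pairs (u,U) of integers with gcd(u,U) = 1. Define R_q(W) as the number of pairs ((u,U),(v,V)) ∈ W × W with U·v ≡ u·V (mod q). Then R_q(W) = ∑_{r ∣ q} ∑_{k=1}^{q/r} (1/(q/r)) · |∑_{(u,U)∈W, gcd(u,q)=r} e_{q/r}(U·(u/r)⁻¹·k)|², where (u/r)⁻¹ denotes the inverse of u/r modulo q/r. -/

import Mathlib

open Complex Finset

private lemma orth (m : ℕ) (hm : 0 < m) (a : ℤ) :
    ∑ k ∈ Finset.Icc 1 m, Complex.exp (2 * Real.pi * Complex.I * a * k / m) =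
      if (m : ℤ) ∣ a then (m : ℂ) else 0 := by
  have hm' : (m : ℂ) ≠ 0 := Nat.cast_ne_zero.mpr hm.ne'
  by_cases h : (m : ℤ) ∣ a
  · rw [if_pos h]
    obtain ⟨b, hb⟩ := h
    have key : ∀ k ∈ Finset.Icc 1 m,
        Complex.exp (2 * Real.pi * Complex.I * a * k / m) = 1 := by
      intro k _
      have heq : (2 * Real.pi * Complex.I * a * k / m : ℂ)
          = ((b * k : ℤ) : ℂ) * (2 * Real.pi * Complex.I) := by
        have ha : (a : ℂ) = (m : ℂ) * (b : ℂ) := by exact_mod_cast congrArg (Int.cast : ℤ → ℂ) hb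
        rw [ha]
        push_cast
        field_simp
      rw [heq, Complex.exp_int_mul_two_pi_mul_I]
    rw [Finset.sum_congr rfl key]
    simp [Nat.card_Icc]
  · rw [if_neg h]
    set ζ := Complex.exp (2 * Real.pi * Complex.I * a / m) with hζdef
    have hpow : ∀ k : ℕ, Complex.exp (2 * Real.pi * Complex.I * a * k / m) = ζ ^ k := by
      intro k
      rw [hζdef, ← Complex.exp_nat_mul]
      congr 1
      field_simp
    have hζm : ζ ^ m = 1 := by
      rw [hζdef, ← Complex.exp_nat_mul]
      have : (m : ℂ) * (2 * Real.pi * Complex.I * a / m) = (a : ℂ) * (2 * Real.pi * Complex.I) := by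
        field_simp
      rw [this, Complex.exp_int_mul_two_pi_mul_I]
    have hζ1 : ζ ≠ 1 := by
      intro h1
      rw [hζdef, Complex.exp_eq_one_iff] at h1
      obtain ⟨n, hn⟩ := h1
      apply h
      have h2 : (2 * (Real.pi : ℂ) * Complex.I) ≠ 0 := by
        simp [Real.pi_ne_zero, Complex.I_ne_zero]
      have key : (2 * (Real.pi : ℂ) * Complex.I) * a = (2 * (Real.pi : ℂ) * Complex.I) * ((m : ℂ) * n) := by
        field_simp at hn
        linear_combination (2 * (Real.pi : ℂ) * Complex.I) * hn
      have hc : (a : ℂ) = ((m * n : ℤ) : ℂ) := by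
        have := mul_left_cancel₀ h2 key
        push_cast
        exact this
      exact ⟨n, by exact_mod_cast hc⟩
    calc ∑ k ∈ Finset.Icc 1 m, Complex.exp (2 * Real.pi * Complex.I * a * k / m)
        = ∑ k ∈ Finset.Icc 1 m, ζ ^ k := Finset.sum_congr rfl fun k _ => hpow k
      _ = ∑ k ∈ Finset.Ico 1 (m + 1), ζ ^ k := by rw [Finset.Ico_add_one_right_eq_Icc]
      _ = ∑ k ∈ Finset.range (m + 1 - 1), ζ ^ (1 + k) := Finset.sum_Ico_eq_sum_range _ 1 (m+1)
      _ = ζ * ∑ k ∈ Finset.range m, ζ ^ k := by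
          simp [pow_add, pow_one, Finset.mul_sum, mul_comm]
      _ = 0 := by rw [geom_sum_eq hζ1, hζm]; simp

private lemma class_count (m : ℕ) (hm : 0 < m) (F : Finset (ℤ × ℤ)) (a : (ℤ × ℤ) → ℤ)
    (orth : ∀ c : ℤ, ∑ k ∈ Finset.Icc 1 m, Complex.exp (2 * Real.pi * Complex.I * c * k / m) =
      if (m : ℤ) ∣ c then (m : ℂ) else 0) :
    ∑ k ∈ Finset.Icc 1 m, (1 / (m : ℂ)) *
      ((∑ p ∈ F, Complex.exp (2 * Real.pi * Complex.I * (a p) * k / m)) *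
       (starRingEnd ℂ) (∑ p ∈ F, Complex.exp (2 * Real.pi * Complex.I * (a p) * k / m))) =
    (((F ×ˢ F).filter (fun x => (m : ℤ) ∣ a x.1 - a x.2)).card : ℂ) := by
  have hm' : (m : ℂ) ≠ 0 := Nat.cast_ne_zero.mpr hm.ne'
  have conj_exp : ∀ (c : ℤ) (k : ℕ),
      (starRingEnd ℂ) (Complex.exp (2 * Real.pi * Complex.I * c * k / m)) =
        Complex.exp (2 * Real.pi * Complex.I * (-c) * k / m) := by
    intro c k
    rw [← Complex.exp_conj]
    congr 1
    simp [map_div₀, map_mul, Complex.conj_I, map_ofNat]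
  have step1 : ∀ k : ℕ,
      ((∑ p ∈ F, Complex.exp (2 * Real.pi * Complex.I * (a p) * k / m)) *
       (starRingEnd ℂ) (∑ p ∈ F, Complex.exp (2 * Real.pi * Complex.I * (a p) * k / m))) =
      ∑ x ∈ F ×ˢ F, Complex.exp (2 * Real.pi * Complex.I * (a x.1 - a x.2) * k / m) := by
    intro k
    rw [map_sum, Finset.sum_mul_sum, ← Finset.sum_product']
    refine Finset.sum_congr rfl fun x _ => ?_
    rw [conj_exp, ← Complex.exp_add]
    congr 1
    ring
  calc ∑ k ∈ Finset.Icc 1 m, (1 / (m : ℂ)) *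
      ((∑ p ∈ F, Complex.exp (2 * Real.pi * Complex.I * (a p) * k / m)) *
       (starRingEnd ℂ) (∑ p ∈ F, Complex.exp (2 * Real.pi * Complex.I * (a p) * k / m)))
      = ∑ k ∈ Finset.Icc 1 m, (1 / (m : ℂ)) *
          ∑ x ∈ F ×ˢ F, Complex.exp (2 * Real.pi * Complex.I * (a x.1 - a x.2) * k / m) := by
        exact Finset.sum_congr rfl fun k _ => by rw [step1 k]
    _ = ∑ x ∈ F ×ˢ F, (1 / (m : ℂ)) *
          ∑ k ∈ Finset.Icc 1 m, Complex.exp (2 * Real.pi * Complex.I * (a x.1 - a x.2) * k / m) := by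
        simp_rw [Finset.mul_sum]
        exact Finset.sum_comm
    _ = ∑ x ∈ F ×ˢ F, (if (m : ℤ) ∣ a x.1 - a x.2 then (1 : ℂ) else 0) := by
        refine Finset.sum_congr rfl fun x _ => ?_
        have ho := orth (a x.1 - a x.2)
        push_cast at ho
        rw [ho]
        split_ifs
        · field_simp
        · simp
    _ = (((F ×ˢ F).filter (fun x => (m : ℤ) ∣ a x.1 - a x.2)).card : ℂ) :=
        Finset.sum_boole _ _

private lemma gcd_eq_of_cong (q : ℕ) (u U v V : ℤ)
    (hu : Int.gcd u U = 1) (hv : Int.gcd v V = 1)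
    (h : U * v ≡ u * V [ZMOD (q : ℤ)]) : Int.gcd u (q : ℤ) = Int.gcd v (q : ℤ) := by
  have hd : ((q : ℤ)) ∣ u * V - U * v := Int.ModEq.dvd h
  refine Nat.dvd_antisymm ?_ ?_
  · -- gcd u q ∣ gcd v q
    have h1 : (Int.gcd u (q : ℤ) : ℤ) ∣ u := Int.gcd_dvd_left _ _
    have h2 : (Int.gcd u (q : ℤ) : ℤ) ∣ (q : ℤ) := Int.gcd_dvd_right _ _
    have h3 : (Int.gcd u (q : ℤ) : ℤ) ∣ U * v := by
      have : (Int.gcd u (q : ℤ) : ℤ) ∣ u * V - (u * V - U * v) := by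
        exact dvd_sub (h1.mul_right V) (h2.trans hd)
      simpa using this
    have hco : IsCoprime ((Int.gcd u (q : ℤ) : ℤ)) U :=
      IsCoprime.of_isCoprime_of_dvd_left (Int.isCoprime_iff_gcd_eq_one.mpr hu) h1
    have h4 : (Int.gcd u (q : ℤ) : ℤ) ∣ v := hco.dvd_of_dvd_mul_left h3
    exact Int.natCast_dvd_natCast.mp (Int.dvd_coe_gcd h4 h2)
  · have hd' : ((q : ℤ)) ∣ U * v - u * V := (Int.ModEq.dvd h.symm)
    have h1 : (Int.gcd v (q : ℤ) : ℤ) ∣ v := Int.gcd_dvd_left _ _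
    have h2 : (Int.gcd v (q : ℤ) : ℤ) ∣ (q : ℤ) := Int.gcd_dvd_right _ _
    have h3 : (Int.gcd v (q : ℤ) : ℤ) ∣ V * u := by
      have : (Int.gcd v (q : ℤ) : ℤ) ∣ U * v - (U * v - u * V) := by
        exact dvd_sub (h1.mul_left U) (h2.trans hd')
      have h' : (Int.gcd v (q : ℤ) : ℤ) ∣ u * V := by simpa using this
      simpa [mul_comm] using h'
    have hco : IsCoprime ((Int.gcd v (q : ℤ) : ℤ)) V :=
      IsCoprime.of_isCoprime_of_dvd_left (Int.isCoprime_iff_gcd_eq_one.mpr hv) h1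
    have h4 : (Int.gcd v (q : ℤ) : ℤ) ∣ u := hco.dvd_of_dvd_mul_left h3
    exact Int.natCast_dvd_natCast.mp (Int.dvd_coe_gcd h4 h2)

private lemma cong_equiv (q r m : ℕ) (hq : q = r * m) (hr : 0 < r)
    (u U v V x y : ℤ)
    (hur : Int.gcd u (q : ℤ) = r) (hvr : Int.gcd v (q : ℤ) = r)
    (hx : (u / (r : ℤ)) * x ≡ 1 [ZMOD (m : ℤ)]) (hy : (v / (r : ℤ)) * y ≡ 1 [ZMOD (m : ℤ)]) :
    (U * v ≡ u * V [ZMOD (q : ℤ)]) ↔ (U * x ≡ V * y [ZMOD (m : ℤ)]) := by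
  have hru : (r : ℤ) ∣ u := hur ▸ Int.gcd_dvd_left _ _
  have hrv : (r : ℤ) ∣ v := hvr ▸ Int.gcd_dvd_left _ _
  set u' := u / (r : ℤ) with hu'
  set v' := v / (r : ℤ) with hv'
  have hu'' : u = (r : ℤ) * u' := (Int.mul_ediv_cancel' hru).symm
  have hv'' : v = (r : ℤ) * v' := (Int.mul_ediv_cancel' hrv).symm
  have hr0 : (r : ℤ) ≠ 0 := Int.natCast_ne_zero.mpr hr.ne'
  -- Step A
  have stepA : (U * v ≡ u * V [ZMOD (q : ℤ)]) ↔ (U * v' ≡ u' * V [ZMOD (m : ℤ)]) := by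
    rw [Int.modEq_iff_dvd, Int.modEq_iff_dvd]
    constructor
    · rintro ⟨c, hc⟩
      refine ⟨c, ?_⟩
      have : (r : ℤ) * (u' * V - U * v') = (r : ℤ) * ((m : ℤ) * c) := by
        rw [show (r:ℤ) * (u' * V - U * v') = u * V - U * v by rw [hu'', hv'']; ring]
        rw [hc, hq]
        push_cast
        ring
      have := mul_left_cancel₀ hr0 this
      linarith [this]
    · rintro ⟨c, hc⟩
      refine ⟨c, ?_⟩
      rw [hu'', hv'', hq]
      push_cast
      rw [show (r:ℤ) * u' * V - U * ((r:ℤ) * v') = (r:ℤ) * (u' * V - U * v') by ring, hc]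
      ring
  rw [stepA]
  -- Step B : pass to ZMod m
  rw [← ZMod.intCast_eq_intCast_iff, ← ZMod.intCast_eq_intCast_iff]
  rw [← ZMod.intCast_eq_intCast_iff] at hx hy
  push_cast at hx hy ⊢
  constructor
  · intro h
    linear_combination ((x:ZMod m) * y) * h - ((U:ZMod m) * x) * hy + ((V:ZMod m) * y) * hx
  · intro h
    linear_combination ((u':ZMod m) * v') * h - ((U:ZMod m) * v') * hx + ((u':ZMod m) * V) * hy

/-- Identity (108n5orm): for a positive integer `q` and a finite set `W` of coprime
pairs `(u,U)`, the number `R_q(W)` of pairs `((u,U),(v,V)) ∈ W × W` with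
`U·v ≡ u·V (mod q)` equals
`∑_{r ∣ q} ∑_{k=1}^{q/r} (1/(q/r)) · |∑_{(u,U)∈W, gcd(u,q)=r} e_{q/r}(U·(u/r)⁻¹·k)|²`,
where `ι` chooses an inverse of `u/r` modulo `q/r`. -/
theorem korobov_count_identity (q : ℕ) (hq : 0 < q) (W : Finset (ℤ × ℤ))
    (hW : ∀ p ∈ W, Int.gcd p.1 p.2 = 1)
    (ι : ℤ → ℕ → ℤ)
    (hι : ∀ r ∈ q.divisors, ∀ p ∈ W, Int.gcd p.1 (q : ℤ) = r →
      (p.1 / (r : ℤ)) * ι p.1 (q / r) ≡ 1 [ZMOD ((q / r : ℕ) : ℤ)]) :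
    ((((W ×ˢ W).filter (fun x => x.1.2 * x.2.1 ≡ x.1.1 * x.2.2 [ZMOD (q : ℤ)])).card : ℝ)) =
      ∑ r ∈ q.divisors, ∑ k ∈ Finset.Icc 1 (q / r),
        (1 / ((q / r : ℕ) : ℝ)) *
          ‖(∑ p ∈ W.filter (fun p => Int.gcd p.1 (q : ℤ) = r),
            Complex.exp (2 * Real.pi * Complex.I *
              ((p.2 : ℂ) * (ι p.1 (q / r) : ℂ) * (k : ℂ)) / ((q / r : ℕ) : ℂ)))‖ ^ 2 := by
  classical
  set T := (W ×ˢ W).filter (fun x => x.1.2 * x.2.1 ≡ x.1.1 * x.2.2 [ZMOD (q : ℤ)]) with hT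
  have hpart : T.card = ∑ r ∈ q.divisors,
      (T.filter (fun x => Int.gcd x.1.1 (q : ℤ) = r)).card := by
    refine Finset.card_eq_sum_card_fiberwise (fun x hx => ?_)
    refine Nat.mem_divisors.mpr ⟨?_, hq.ne'⟩
    exact Int.natCast_dvd_natCast.mp (Int.gcd_dvd_right _ _)
  have key : ((T.card : ℂ)) = ∑ r ∈ q.divisors, ∑ k ∈ Finset.Icc 1 (q / r),
      (((1 / ((q / r : ℕ) : ℝ)) *
          ‖(∑ p ∈ W.filter (fun p => Int.gcd p.1 (q : ℤ) = r),
            Complex.exp (2 * Real.pi * Complex.I *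
              ((p.2 : ℂ) * (ι p.1 (q / r) : ℂ) * (k : ℂ)) / ((q / r : ℕ) : ℂ)))‖ ^ 2 : ℝ) : ℂ) := by
    rw [hpart]
    push_cast
    refine Finset.sum_congr rfl fun r hr => ?_
    set m := q / r with hm'
    have hrpos : 0 < r := Nat.pos_of_mem_divisors hr
    have hrdvd : r ∣ q := (Nat.mem_divisors.mp hr).1
    have hmpos : 0 < m := Nat.div_pos (Nat.le_of_dvd hq hrdvd) hrpos
    have hqrm : q = r * m := (Nat.mul_div_cancel' hrdvd).symm
    set F := W.filter (fun p => Int.gcd p.1 (q : ℤ) = r) with hF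
    set a : (ℤ × ℤ) → ℤ := fun p => p.2 * ι p.1 m with ha
    have hfe : T.filter (fun x => Int.gcd x.1.1 (q : ℤ) = r)
        = (F ×ˢ F).filter (fun x => (m : ℤ) ∣ a x.1 - a x.2) := by
      ext x
      simp only [hT, hF, Finset.mem_filter, Finset.mem_product]
      constructor
      · rintro ⟨⟨⟨h1, h2⟩, hcong⟩, hg⟩
        have hg2 : Int.gcd x.2.1 (q : ℤ) = r := by
          rw [← hg]
          exact (gcd_eq_of_cong q x.1.1 x.1.2 x.2.1 x.2.2 (hW _ h1) (hW _ h2) hcong).symm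
        have hiff := cong_equiv q r m hqrm hrpos x.1.1 x.1.2 x.2.1 x.2.2
          (ι x.1.1 m) (ι x.2.1 m) hg hg2
          (hι r hr x.1 h1 hg) (hι r hr x.2 h2 hg2)
        have hmod := hiff.mp hcong
        exact ⟨⟨⟨h1, hg⟩, h2, hg2⟩, hmod.symm.dvd⟩
      · rintro ⟨⟨⟨h1, hg⟩, h2, hg2⟩, hdvd⟩
        have hiff := cong_equiv q r m hqrm hrpos x.1.1 x.1.2 x.2.1 x.2.2
          (ι x.1.1 m) (ι x.2.1 m) hg hg2
          (hι r hr x.1 h1 hg) (hι r hr x.2 h2 hg2)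
        have hmod : a x.1 ≡ a x.2 [ZMOD (m : ℤ)] :=
          (Int.modEq_iff_dvd.mpr hdvd).symm
        exact ⟨⟨⟨h1, h2⟩, hiff.mpr hmod⟩, hg⟩
    calc ((T.filter (fun x => Int.gcd x.1.1 (q : ℤ) = r)).card : ℂ)
        = (((F ×ˢ F).filter (fun x => (m : ℤ) ∣ a x.1 - a x.2)).card : ℂ) := by rw [hfe]
      _ = ∑ k ∈ Finset.Icc 1 m, (1 / (m : ℂ)) *
            ((∑ p ∈ F, Complex.exp (2 * Real.pi * Complex.I * (a p) * k / m)) *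
             (starRingEnd ℂ) (∑ p ∈ F, Complex.exp (2 * Real.pi * Complex.I * (a p) * k / m))) :=
          (class_count m hmpos F a (fun c => orth m hmpos c)).symm
      _ = _ := by
          refine Finset.sum_congr rfl fun k _ => ?_
          have hS : (∑ p ∈ F, Complex.exp (2 * Real.pi * Complex.I * (a p) * k / m))
              = ∑ p ∈ F, Complex.exp (2 * Real.pi * Complex.I *
                  ((p.2 : ℂ) * (ι p.1 m : ℂ) * (k : ℂ)) / (m : ℂ)) := by
            refine Finset.sum_congr rfl fun p _ => ?_
            congr 1
            push_cast [ha]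
            ring
          rw [hS, Complex.mul_conj, ← Complex.sq_norm, Complex.ofReal_pow]
  exact_mod_cast key
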